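/- (Lossless decodability.) Let N ≥ 1, L ≥ 2, and let x, y ∈ {0, 1, ..., L−1}^N. Suppose that x and y have the same type vector, i.e. t_ℓ(x) = t_ℓ(y) for every 0 ≤ ℓ ≤ L−1, and that for every 1 ≤ ℓ ≤ L−1 the first t_ℓ(x) run lengths of the restricted support vector s_ℓ[I_ℓ(x)] of x coincide with the first t_ℓ(y) run lengths of the restricted support vector s_ℓ[I_ℓ(y)] of y. Then x = y. In other words, the map sending x to (t_0(x), ..., t_{L−1}(x)) together with the tuple of run-length sequences (r_1^ℓ, ..., r_{t_ℓ(x)}^ℓ) for ℓ = 1, ..., L−1 is injective on {0,...,L−1}^N. -/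
import Mathlib


/-- The run lengths of zeros of a binary string: for each `true` (a "one"), in
order, the number of consecutive `false`s ("zeros") immediately preceding it.
The trailing run of zeros after the last one is not recorded. -/
def runLengths : List Bool → List ℕ
  | [] => []
  | b :: rest =>
    if b then 0 :: runLengths rest
    else
      match runLengths rest with
      | [] => []
      | r :: rs => (r + 1) :: rs

/-- The type (frequency) of symbol `m` in `x ∈ {0,…,L−1}^N`:
`t_m(x) = #{n : x_n = m}`. -/
def typeCount (N : ℕ) (x : Fin N → ℕ) (m : ℕ) : ℕ :=
  ((List.finRange N).filter (fun n => decide (x n = m))).length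

/-- The index sets, as sorted lists: `I₁ = (1,…,N)` and
`I_{ℓ+1} = I_ℓ \ {n : x_n = ℓ}` for `ℓ ≥ 1`. -/
def idxList (N : ℕ) (x : Fin N → ℕ) : ℕ → List (Fin N)
  | 0 => List.finRange N
  | ℓ + 1 =>
    if ℓ = 0 then List.finRange N
    else (idxList N x ℓ).filter (fun n => decide (x n ≠ ℓ))

/-- The restricted support vector `s_ℓ[I_ℓ]`: the binary string whose `i`-th
entry is `true` iff the `i`-th smallest index `n` in `I_ℓ` satisfies `x_n = ℓ`. -/
def supportList (N : ℕ) (x : Fin N → ℕ) (ℓ : ℕ) : List Bool :=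
  (idxList N x ℓ).map (fun n => decide (x n = ℓ))

lemma runLengths_eq_nil {l : List Bool} (h : runLengths l = []) : ∀ b ∈ l, b = false := by
  induction l with
  | nil => simp
  | cons a t ih =>
    intro b hb
    cases a with
    | true => simp [runLengths] at h
    | false =>
      rcases List.mem_cons.mp hb with rfl | hb
      · rfl
      · cases hrt : runLengths t with
        | nil => exact ih hrt b hb
        | cons r rs => simp [runLengths, hrt] at h

lemma eq_of_runLengths_eq : ∀ (a b : List Bool), a.length = b.length →
    runLengths a = runLengths b → a = b := by
  intro a
  induction a with
  | nil =>
    intro b hl _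
    cases b with
    | nil => rfl
    | cons s b' => simp at hl
  | cons t a' ih =>
    intro b hl hr
    cases b with
    | nil => simp at hl
    | cons s b' =>
      simp only [List.length_cons, Nat.add_right_cancel_iff] at hl
      cases t <;> cases s <;>
        simp only [runLengths, if_true, if_false, Bool.false_eq_true] at hr
      · cases ha : runLengths a' <;> cases hb : runLengths b' <;> simp [ha, hb] at hr
        · have h1 : a' = List.replicate a'.length false :=
            List.eq_replicate_iff.mpr ⟨rfl, runLengths_eq_nil ha⟩
          have h2 : b' = List.replicate b'.length false :=
            List.eq_replicate_iff.mpr ⟨rfl, runLengths_eq_nil hb⟩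
          rw [h1, h2, hl]
        · have : a' = b' := ih b' hl (by rw [ha, hb, hr.1, hr.2])
          rw [this]
      · cases ha : runLengths a' <;> simp [ha] at hr
      · cases hb : runLengths b' <;> simp [hb] at hr
      · rw [ih b' hl (by simpa using hr)]

lemma mem_idxList (N : ℕ) (x : Fin N → ℕ) (ℓ : ℕ) (n : Fin N) :
    n ∈ idxList N x ℓ ↔ ∀ m, 1 ≤ m → m < ℓ → x n ≠ m := by
  induction ℓ with
  | zero => simp [idxList]
  | succ ℓ ih =>
    by_cases h0 : ℓ = 0
    · subst h0
      simp only [idxList, if_true]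
      simp only [List.mem_finRange, true_iff]
      intro m h1 h2; omega
    · simp only [idxList, if_neg h0, List.mem_filter, ih, decide_eq_true_eq]
      constructor
      · rintro ⟨h1, h2⟩ m hm1 hm2
        rcases Nat.lt_succ_iff_lt_or_eq.mp hm2 with h | rfl
        · exact h1 m hm1 h
        · exact h2
      · intro h
        exact ⟨fun m hm1 hm2 => h m hm1 (by omega),
          h ℓ (by omega) (by omega)⟩

lemma map_eq_map_pt {α β : Type*} {l : List α} {f g : α → β}
    (h : l.map f = l.map g) : ∀ a ∈ l, f a = g a := by
  induction l with
  | nil => simp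
  | cons a t ih =>
    simp only [List.map_cons, List.cons.injEq] at h
    intro b hb
    rcases List.mem_cons.mp hb with rfl | hb
    · exact h.1
    · exact ih h.2 b hb

/-- **lossless decodability.**  If `x, y ∈ {0,…,L−1}^N` have the
same type vector and, for every `1 ≤ ℓ ≤ L−1`, the run lengths of the
restricted support vector `s_ℓ[I_ℓ(x)]` coincide with those of `s_ℓ[I_ℓ(y)]`
(the trailing run of zeros being dropped), then `x = y`; i.e. the encoding map
is injective. -/
theorem lossless_decodability (N L : ℕ) (hN : 1 ≤ N) (hL : 2 ≤ L)
    (x y : Fin N → ℕ) (hx : ∀ n, x n < L) (hy : ∀ n, y n < L)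
    (htype : ∀ ℓ < L, typeCount N x ℓ = typeCount N y ℓ)
    (hrl : ∀ ℓ, 1 ≤ ℓ → ℓ ≤ L - 1 →
      runLengths (supportList N x ℓ) = runLengths (supportList N y ℓ)) :
    x = y := by
  have step : ∀ ℓ, 1 ≤ ℓ → ℓ ≤ L - 1 → idxList N x ℓ = idxList N y ℓ →
      ∀ n, (x n = ℓ ↔ y n = ℓ) := by
    intro ℓ h1 h2 hidx n
    have hsupp : supportList N x ℓ = supportList N y ℓ := by
      apply eq_of_runLengths_eq _ _ _ (hrl ℓ h1 h2)
      simp [supportList, hidx]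
    have hpt : ∀ m ∈ idxList N x ℓ, decide (x m = ℓ) = decide (y m = ℓ) := by
      apply map_eq_map_pt
      rw [supportList, supportList, ← hidx] at hsupp
      exact hsupp
    by_cases hn : n ∈ idxList N x ℓ
    · exact decide_eq_decide.mp (hpt n hn)
    · constructor
      · intro h
        exfalso; apply hn
        rw [mem_idxList]
        intro m hm1 hm2; omega
      · intro h
        exfalso
        have hn' : n ∉ idxList N y ℓ := by rw [← hidx]; exact hn
        rw [mem_idxList] at hn'
        push_neg at hn'
        obtain ⟨m, hm1, hm2, hm3⟩ := hn'
        omega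
  have key : ∀ ℓ, 1 ≤ ℓ → ℓ ≤ L - 1 →
      idxList N x ℓ = idxList N y ℓ ∧ ∀ n, (x n = ℓ ↔ y n = ℓ) := by
    intro ℓ h1
    induction ℓ, h1 using Nat.le_induction with
    | base =>
      intro h2
      have hidx : idxList N x 1 = idxList N y 1 := by simp [idxList]
      exact ⟨hidx, step 1 le_rfl h2 hidx⟩
    | succ ℓ hℓ ih =>
      intro h2
      obtain ⟨hidx, hiff⟩ := ih (by omega)
      have hidx' : idxList N x (ℓ + 1) = idxList N y (ℓ + 1) := by
        have h0 : ℓ ≠ 0 := by omega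
        simp only [idxList, if_neg h0, hidx]
        apply List.filter_congr
        intro n _
        simp [hiff n]
      exact ⟨hidx', step (ℓ + 1) (by omega) h2 hidx'⟩
  funext n
  by_cases hx0 : x n = 0
  · by_cases hy0 : y n = 0
    · rw [hx0, hy0]
    · have h := (key (y n) (by omega) (by have := hy n; omega)).2 n
      exact (h.mpr rfl)
  · have h := (key (x n) (by omega) (by have := hx n; omega)).2 n
    exact (h.mp rfl).symm
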